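/- arXiv:2009.13093 — 3 statements merged into one kernel-verified Lean document; each statement's English description precedes it below -/
import Mathlib

section
/- Let f:(0,∞)→ℝ be uniformly continuous and convex with f(1)=0, and let λ_n ≥ 0 with λ_n → 1. Then for probability densities q, p (q absolutely continuous w.r.t. p, with q/p integrable against p in the relevant sense), D_{f_{λ_n}}(q‖p) → D_f(q‖p) as n → ∞. -/
open MeasureTheory Set Filter

lemma lin_growth (f : ℝ → ℝ) (hf : ConvexOn ℝ (Set.Ioi 0) f) {ε δ : ℝ} (hδ : 0 < δ)
    (H : ∀ x ∈ Set.Ioi (0:ℝ), ∀ y ∈ Set.Ioi (0:ℝ), dist x y ≤ δ → dist (f x) (f y) ≤ ε) :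
    ∀ x ∈ Set.Ioi (0:ℝ), ∀ y ∈ Set.Ioi (0:ℝ), |f x - f y| ≤ (2*ε/δ) * |x - y| + ε := by
  have hε : 0 ≤ ε := by
    have := H 1 (by norm_num) 1 (by norm_num) (by simp [hδ.le])
    simpa using this
  have key : ∀ x ∈ Set.Ioi (0:ℝ), ∀ y ∈ Set.Ioi (0:ℝ), x ≤ y →
      |f x - f y| ≤ (2*ε/δ) * |x - y| + ε := by
    intro x hx y hy hxy
    rw [Set.mem_Ioi] at hx hy
    by_cases hclose : y - x ≤ δ
    · have h1 := H x (Set.mem_Ioi.mpr hx) y (Set.mem_Ioi.mpr hy)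
        (by rw [Real.dist_eq, abs_of_nonpos (by linarith : x - y ≤ 0)]; linarith)
      rw [Real.dist_eq] at h1
      have : 0 ≤ (2*ε/δ) * |x - y| := by positivity
      linarith
    · push_neg at hclose
      have hxy' : x < y := by linarith
      have hm0 : (0:ℝ) < y - δ/2 := by linarith
      have hm'0 : (0:ℝ) < x + δ/2 := by linarith
      -- upper bound on f y - f x
      have hsec1 := hf.secant_mono (Set.mem_Ioi.mpr hy) (Set.mem_Ioi.mpr hx)
        (Set.mem_Ioi.mpr hm0) (ne_of_lt hxy') (by intro h; linarith) (by linarith)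
      have hfm : |f (y - δ/2) - f y| ≤ ε := by
        have := H (y - δ/2) (Set.mem_Ioi.mpr hm0) y (Set.mem_Ioi.mpr hy)
          (by rw [Real.dist_eq, abs_of_nonpos (by linarith : y - δ/2 - y ≤ 0)]; linarith)
        rw [Real.dist_eq] at this; exact this
      have e1 : (f x - f y) / (x - y) = (f y - f x) / (y - x) := by
        rw [div_eq_div_iff (sub_ne_zero.mpr (ne_of_lt hxy')) (sub_ne_zero.mpr (ne_of_gt hxy'))]
        ring
      have e2 : (f (y - δ/2) - f y) / (y - δ/2 - y) = (f y - f (y - δ/2)) / (δ/2) := by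
        rw [div_eq_div_iff (by intro h; nlinarith) (by positivity)]
        ring
      rw [e1, e2] at hsec1
      rw [div_le_div_iff₀ (by linarith) (by linarith)] at hsec1
      have hub : f y - f x ≤ 2*ε/δ * (y - x) := by
        rw [div_mul_eq_mul_div, le_div_iff₀ hδ]
        nlinarith [abs_le.mp hfm]
      -- lower bound on f y - f x
      have hsec2 := hf.secant_mono (Set.mem_Ioi.mpr hx) (Set.mem_Ioi.mpr hm'0)
        (Set.mem_Ioi.mpr hy) (by intro h; linarith) (ne_of_gt hxy') (by linarith)
      have hfm' : |f (x + δ/2) - f x| ≤ ε := by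
        have := H (x + δ/2) (Set.mem_Ioi.mpr hm'0) x (Set.mem_Ioi.mpr hx)
          (by rw [Real.dist_eq, abs_of_nonneg (by linarith : (0:ℝ) ≤ x + δ/2 - x)]; linarith)
        rw [Real.dist_eq] at this; exact this
      have e3 : (f (x + δ/2) - f x) / (x + δ/2 - x) = (f (x + δ/2) - f x) / (δ/2) := by
        norm_num
      rw [e3] at hsec2
      rw [div_le_div_iff₀ (by positivity) (by linarith)] at hsec2
      have hlb : f x - f y ≤ 2*ε/δ * (y - x) := by
        rw [div_mul_eq_mul_div, le_div_iff₀ hδ]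
        nlinarith [abs_le.mp hfm']
      have hxyabs : |x - y| = y - x := by
        rw [abs_of_nonpos (by linarith : x - y ≤ 0)]; ring
      rw [hxyabs]
      rw [abs_le]
      constructor <;> nlinarith
  intro x hx y hy
  rcases le_total x y with h | h
  · exact key x hx y hy h
  · rw [abs_sub_comm, abs_sub_comm x y]; exact key y hy x hx h

/-- convergence of the surrogate f-divergence D_{f_{λ_n}}(q‖p) to D_f(q‖p)
    as λ_n → 1. -/
theorem surrogate_divergence_tendsto {α : Type*} [MeasurableSpace α] (μ : Measure α)
    (f : ℝ → ℝ) (hf : ConvexOn ℝ (Set.Ioi 0) f) (hf1 : f 1 = 0)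
    (hfu : UniformContinuousOn f (Set.Ioi 0))
    (lam : ℕ → ℝ) (hlam0 : ∀ n, 0 ≤ lam n) (hlam : Tendsto lam atTop (nhds 1))
    (q p : α → ℝ) (hq0 : ∀ z, 0 ≤ q z) (hp0 : ∀ z, 0 ≤ p z)
    (hq1 : ∫ z, q z ∂μ = 1) (hp1 : ∫ z, p z ∂μ = 1)
    (hac : ∀ z, p z = 0 → q z = 0)
    (hint : Integrable (fun z => p z * f (q z / p z)) μ)
    (hintn : ∀ n, Integrable (fun z => p z * (f (lam n * (q z / p z)) - f (lam n))) μ) :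
    Tendsto (fun n => ∫ z, p z * (f (lam n * (q z / p z)) - f (lam n)) ∂μ)
      atTop (nhds (∫ z, p z * f (q z / p z) ∂μ)) := by
  have hqint : Integrable q μ := by
    by_contra h; rw [integral_undef h] at hq1; norm_num at hq1
  have hpint : Integrable p μ := by
    by_contra h; rw [integral_undef h] at hp1; norm_num at hp1
  have hpos : ∀ᶠ n in atTop, 0 < lam n := hlam.eventually (eventually_gt_nhds one_pos)
  have hflam : Tendsto (fun n => |f (lam n)|) atTop (nhds 0) := by
    have h1 : Tendsto (fun n => f (lam n)) atTop (nhds 0) := by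
      rw [← hf1]
      exact (hfu.continuousOn 1 (by norm_num)).tendsto.comp
        (tendsto_nhdsWithin_iff.mpr ⟨hlam, hpos.mono fun n h => Set.mem_Ioi.mpr h⟩)
    simpa using h1.abs
  have hd : Tendsto (fun n => |lam n - 1|) atTop (nhds 0) := by
    have := (hlam.sub (tendsto_const_nhds (x := (1:ℝ)))).abs
    simpa using this
  rw [Metric.tendsto_nhds]
  intro ε' hε'
  obtain ⟨δ, hδ, H⟩ := Metric.uniformContinuousOn_iff_le.mp hfu (ε'/4) (by linarith)
  have key := lin_growth f hf hδ H
  set c1 : ℝ := 2*(ε'/4)/δ with hc1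
  have hc1nn : 0 ≤ c1 := by positivity
  have hB : Tendsto (fun n => c1 * |lam n - 1| + ε'/4 + |f (lam n)|) atTop (nhds (ε'/4)) := by
    have := ((hd.const_mul c1).add (tendsto_const_nhds (x := ε'/4))).add hflam
    simpa using this
  have hev : ∀ᶠ n in atTop, c1 * |lam n - 1| + ε'/4 + |f (lam n)| < ε'/2 :=
    hB.eventually (eventually_lt_nhds (by linarith))
  filter_upwards [hpos, hev] with n hn hevn
  -- pointwise bound
  have hpt : ∀ z, |p z * (f (lam n * (q z / p z)) - f (lam n)) - p z * f (q z / p z)| ≤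
      c1 * |lam n - 1| * q z + (ε'/4) * p z + |f (lam n)| * p z := by
    intro z
    by_cases hpz : p z = 0
    · simp [hpz, hac z hpz]
    · have hpz' : 0 < p z := lt_of_le_of_ne (hp0 z) (Ne.symm hpz)
      have hr0 : 0 ≤ q z / p z := div_nonneg (hq0 z) (hp0 z)
      have hpr : p z * (q z / p z) = q z := by
        rw [mul_comm, div_mul_cancel₀ _ hpz]
      have habs : |f (lam n * (q z / p z)) - f (q z / p z)| ≤ c1 * |lam n - 1| * (q z / p z) + ε'/4 := by
        rcases eq_or_lt_of_le hr0 with h0 | hrpos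
        · rw [← h0]
          simp only [mul_zero]
          norm_num
          linarith
        · have hk := key (lam n * (q z / p z)) (Set.mem_Ioi.mpr (mul_pos hn hrpos))
            (q z / p z) (Set.mem_Ioi.mpr hrpos)
          have he : |lam n * (q z / p z) - q z / p z| = |lam n - 1| * (q z / p z) := by
            rw [show lam n * (q z / p z) - q z / p z = (lam n - 1) * (q z / p z) by ring,
              abs_mul, abs_of_nonneg hr0]
          rw [he] at hk
          calc |f (lam n * (q z / p z)) - f (q z / p z)|
              ≤ c1 * (|lam n - 1| * (q z / p z)) + ε'/4 := hk
            _ = c1 * |lam n - 1| * (q z / p z) + ε'/4 := by ring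
      have h1 : |p z * (f (lam n * (q z / p z)) - f (lam n)) - p z * f (q z / p z)|
          = p z * |(f (lam n * (q z / p z)) - f (q z / p z)) - f (lam n)| := by
        rw [show p z * (f (lam n * (q z / p z)) - f (lam n)) - p z * f (q z / p z)
            = p z * ((f (lam n * (q z / p z)) - f (q z / p z)) - f (lam n)) by ring,
          abs_mul, abs_of_nonneg (hp0 z)]
      have h2 : |(f (lam n * (q z / p z)) - f (q z / p z)) - f (lam n)|
          ≤ |f (lam n * (q z / p z)) - f (q z / p z)| + |f (lam n)| := abs_sub _ _
      rw [h1]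
      have h3 := mul_le_mul_of_nonneg_left (h2.trans (add_le_add_left habs _)) (hp0 z)
      have h4 : p z * (c1 * |lam n - 1| * (q z / p z) + ε'/4 + |f (lam n)|)
          = c1 * |lam n - 1| * q z + ε'/4 * p z + |f (lam n)| * p z := by
        field_simp
      exact h3.trans_eq h4
  -- integral estimate
  have hA : Integrable (fun z => c1 * |lam n - 1| * q z) μ := hqint.const_mul _
  have hBint : Integrable (fun z => (ε'/4) * p z) μ := hpint.const_mul _
  have hC : Integrable (fun z => |f (lam n)| * p z) μ := hpint.const_mul _
  have hAB : Integrable (fun z => c1 * |lam n - 1| * q z + (ε'/4) * p z) μ := hA.add hBint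
  have hIb : Integrable (fun z => c1 * |lam n - 1| * q z + (ε'/4) * p z + |f (lam n)| * p z) μ :=
    hAB.add hC
  have hIsub : Integrable (fun z => p z * (f (lam n * (q z / p z)) - f (lam n)) - p z * f (q z / p z)) μ :=
    (hintn n).sub hint
  rw [Real.dist_eq, ← integral_sub (hintn n) hint]
  calc |∫ z, (p z * (f (lam n * (q z / p z)) - f (lam n)) - p z * f (q z / p z)) ∂μ|
      ≤ ∫ z, |p z * (f (lam n * (q z / p z)) - f (lam n)) - p z * f (q z / p z)| ∂μ :=
        by
          simpa [Real.norm_eq_abs] using norm_integral_le_integral_norm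
            (fun z => p z * (f (lam n * (q z / p z)) - f (lam n)) - p z * f (q z / p z))
    _ ≤ ∫ z, (c1 * |lam n - 1| * q z + (ε'/4) * p z + |f (lam n)| * p z) ∂μ :=
        integral_mono hIsub.abs hIb hpt
    _ = c1 * |lam n - 1| * (∫ z, q z ∂μ) + (ε'/4) * (∫ z, p z ∂μ) + |f (lam n)| * (∫ z, p z ∂μ) := by
        rw [integral_add hAB hC, integral_add hA hBint,
          integral_const_mul, integral_const_mul, integral_const_mul]
    _ < ε' := by rw [hq1, hp1]; simp only [mul_one]; linarith
end

section
/- The map g(λ) = ∫ p(z) f(λ·q(z)/p(z)) dz is continuous in λ on (0,∞), when f:(0,∞)→ℝ is uniformly continuous and q, p are probability densities. -/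
open MeasureTheory Set

/-- A uniformly continuous function on `(0,∞)` has at most linear growth. -/
lemma lin_growth_of_uc {f : ℝ → ℝ} (hfu : UniformContinuousOn f (Set.Ioi 0)) :
    ∃ A B : ℝ, 0 ≤ A ∧ 0 ≤ B ∧ ∀ x > (0:ℝ), |f x| ≤ A + B * x := by
  obtain ⟨δ, hδ, hδ1⟩ := Metric.uniformContinuousOn_iff.mp hfu 1 one_pos
  set h := δ / 2 with hh
  have hh0 : 0 < h := by positivity
  have hhδ : h < δ := by simp [hh]; linarith
  have key : ∀ n : ℕ, ∀ x : ℝ, 0 < x → x ≤ h * (n + 1) → |f x| ≤ (|f h| + 1) + n := by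
    intro n
    induction n with
    | zero =>
      intro x hx hxh
      have hd : dist x h < δ := by
        rw [Real.dist_eq, abs_lt]
        constructor <;> simp at hxh ⊢ <;> linarith
      have := hδ1 x hx h hh0 hd
      rw [Real.dist_eq] at this
      have := abs_sub_abs_le_abs_sub (f x) (f h)
      push_cast; linarith
    | succ n ih =>
      intro x hx hxh
      by_cases hc : x ≤ h * (n + 1)
      · have := ih x hx hc; push_cast at this ⊢; linarith
      · push_neg at hc
        have hx' : 0 < x - h := by nlinarith [hh0, (by positivity : (0:ℝ) ≤ h * n)]
        have hx'' : x - h ≤ h * (n + 1) := by push_cast at hxh ⊢; linarith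
        have hd : dist x (x - h) < δ := by
          rw [Real.dist_eq]
          simp [abs_of_pos hh0]; linarith
        have h1 := hδ1 x hx (x - h) hx' hd
        rw [Real.dist_eq] at h1
        have h2 := ih (x - h) hx' hx''
        have := abs_sub_abs_le_abs_sub (f x) (f (x - h))
        push_cast at h2 ⊢; linarith
  refine ⟨|f h| + 2, 1 / h, by positivity, by positivity, fun x hx => ?_⟩
  set n := ⌈x / h⌉₊ with hn
  have h1 : x ≤ h * (n + 1) := by
    have : x / h ≤ n := Nat.le_ceil _
    rw [div_le_iff₀ hh0] at this
    nlinarith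
  have h2 : (n : ℝ) ≤ x / h + 1 := by
    have : (⌈x / h⌉₊ : ℝ) < x / h + 1 := Nat.ceil_lt_add_one (by positivity)
    linarith
  have h3 := key n x hx h1
  have h4 : x / h = 1 / h * x := by ring
  linarith [h3, h2, h4 ▸ h2]

/-- continuity in λ of g(λ) = ∫ p f(λ q/p). -/
theorem surrogate_integral_continuousOn {α : Type*} [MeasurableSpace α] (μ : Measure α)
    (f : ℝ → ℝ) (hfu : UniformContinuousOn f (Set.Ioi 0))
    (q p : α → ℝ) (hq0 : ∀ z, 0 ≤ q z) (hp0 : ∀ z, 0 ≤ p z)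
    (hq1 : ∫ z, q z ∂μ = 1) (hp1 : ∫ z, p z ∂μ = 1)
    (hac : ∀ z, p z = 0 → q z = 0)
    (hint : ∀ l > (0:ℝ), Integrable (fun z => p z * f (l * (q z / p z))) μ) :
    ContinuousOn (fun l => ∫ z, p z * f (l * (q z / p z)) ∂μ) (Set.Ioi 0) := by
  obtain ⟨A, B, hA, hB, hAB⟩ := lin_growth_of_uc hfu
  have hip : Integrable p μ := by
    by_contra hc; rw [integral_undef hc] at hp1; norm_num at hp1
  have hiq : Integrable q μ := by
    by_contra hc; rw [integral_undef hc] at hq1; norm_num at hq1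
  have hfc : ContinuousOn f (Set.Ioi 0) := hfu.continuousOn
  intro l₀ hl₀
  simp only [Set.mem_Ioi] at hl₀
  apply continuousWithinAt_of_dominated (bound :=
    fun z => (A + |f 0|) * p z + (B * (l₀ + 1)) * q z)
  · filter_upwards [eventually_mem_nhdsWithin] with l hl
    exact (hint l hl).aestronglyMeasurable
  · have hev : ∀ᶠ l in nhdsWithin l₀ (Set.Ioi 0), l < l₀ + 1 :=
      eventually_nhdsWithin_of_eventually_nhds
        (Filter.Tendsto.eventually_lt_const (by linarith) Filter.tendsto_id)
    filter_upwards [eventually_mem_nhdsWithin, hev] with l hl hl1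
    refine Filter.Eventually.of_forall fun z => ?_
    simp only [Set.mem_Ioi] at hl
    rcases eq_or_lt_of_le (hp0 z) with hp | hp
    · have hqz := hac z hp.symm
      simp [← hp, hqz]
    rcases eq_or_lt_of_le (hq0 z) with hq | hq
    · simp only [← hq, zero_div, mul_zero]
      rw [Real.norm_eq_abs, abs_mul, abs_of_pos hp]
      have : p z * |f 0| ≤ (A + |f 0|) * p z := by nlinarith
      nlinarith [mul_nonneg (mul_nonneg hB (by linarith : (0:ℝ) ≤ l₀ + 1)) (hq0 z)]
    · have harg : 0 < l * (q z / p z) := by positivity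
      have hbound := hAB _ harg
      rw [Real.norm_eq_abs, abs_mul, abs_of_pos hp]
      have h1 : p z * |f (l * (q z / p z))| ≤ p z * (A + B * (l * (q z / p z))) :=
        mul_le_mul_of_nonneg_left hbound (le_of_lt hp)
      have h2 : p z * (A + B * (l * (q z / p z))) = A * p z + B * l * q z := by
        field_simp
      have h3 : B * l * q z ≤ B * (l₀ + 1) * q z := by
        apply mul_le_mul_of_nonneg_right _ (hq0 z)
        nlinarith
      nlinarith [mul_nonneg (abs_nonneg (f 0)) (le_of_lt hp)]
  · exact (hip.const_mul _).add (hiq.const_mul _)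
  · refine Filter.Eventually.of_forall fun z => ?_
    rcases eq_or_lt_of_le (hp0 z) with hp | hp
    · simpa [← hp] using continuousWithinAt_const
    rcases eq_or_lt_of_le (hq0 z) with hq | hq
    · simpa [← hq] using continuousWithinAt_const
    · have hc : 0 < q z / p z := by positivity
      refine ContinuousWithinAt.mul continuousWithinAt_const ?_
      have hmul : ContinuousWithinAt (fun l : ℝ => l * (q z / p z)) (Set.Ioi 0) l₀ :=
        (continuous_mul_right _).continuousWithinAt
      refine ContinuousWithinAt.comp (hfc _ ?_) hmul ?_
      · exact mul_pos hl₀ hc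
      · intro l hl
        simp only [Set.mem_Ioi] at hl ⊢
        positivity
end

section
/- If f is convex with f(1)=0 and satisfies f(ts) = t^γ f(s) + f(t)·s for all t,s > 0 (type 1 shifted homogeneity), then for any λ > 0 and probability densities q, p, the surrogate divergence satisfies D_{f_λ}(q‖p) = λ^γ · D_f(q‖p). -/
open MeasureTheory Set

/-- for a type-1 shifted homogeneous f, D_{f_λ}(q‖p) = λ^γ D_f(q‖p). -/
theorem surrogate_eq_scaled_type1 {α : Type*} [MeasurableSpace α] (μ : Measure α)
    (f : ℝ → ℝ) (γ : ℝ) (hf : ConvexOn ℝ (Set.Ioi 0) f) (hf1 : f 1 = 0)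
    (hhom : ∀ t s : ℝ, 0 < t → 0 < s → f (t * s) = t ^ γ * f s + f t * s)
    (lam : ℝ) (hlam : 0 < lam)
    (q p : α → ℝ) (hq0 : ∀ z, 0 ≤ q z) (hp0 : ∀ z, 0 ≤ p z)
    (hqi : Integrable q μ) (hpi : Integrable p μ)
    (hq1 : ∫ z, q z ∂μ = 1) (hp1 : ∫ z, p z ∂μ = 1)
    (hac : ∀ z, p z = 0 ↔ q z = 0)
    (hint : Integrable (fun z => p z * f (q z / p z)) μ) :
    ∫ z, p z * (f (lam * (q z / p z)) - f lam) ∂μ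
      = lam ^ γ * ∫ z, p z * f (q z / p z) ∂μ := by
  have key : ∀ z, p z * (f (lam * (q z / p z)) - f lam)
      = lam ^ γ * (p z * f (q z / p z)) + f lam * (q z - p z) := by
    intro z
    rcases eq_or_lt_of_le (hp0 z) with h | h
    · have hp : p z = 0 := h.symm
      have hq : q z = 0 := (hac z).mp hp
      simp [hp, hq]
    · have hqne : q z ≠ 0 := fun h0 => absurd ((hac z).mpr h0) (ne_of_gt h)
      have hq : 0 < q z := lt_of_le_of_ne (hq0 z) (Ne.symm hqne)
      have hs : 0 < q z / p z := div_pos hq h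
      rw [hhom lam _ hlam hs]
      have hpne : p z ≠ 0 := ne_of_gt h
      field_simp
      ring
  simp_rw [key]
  rw [integral_add (hint.const_mul _) (((hqi.sub hpi).const_mul (f lam)).congr (Filter.Eventually.of_forall fun z => by simp [Pi.sub_apply])),
    MeasureTheory.integral_const_mul, MeasureTheory.integral_const_mul, integral_sub hqi hpi, hq1, hp1]
  ring
end
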